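/- Let A ⊆ ℕ₀ be a finite 3-free set, S(A) the Stanley sequence generated by A, and S(A,x) its counting function. Then for every ε > 0 there exists x₀ = x₀(ε, A) such that for all x ≥ x₀, S(A,x) > x^{1/2 − ε}. -/

import Mathlib

/-- A set of nonnegative integers is 3-free if it contains no three-term
arithmetic progression `a < b < c` with `a + c = 2b`. -/
def ThreeFree (S : Set ℕ) : Prop :=
  ∀ a ∈ S, ∀ b ∈ S, ∀ c ∈ S, a < b → b < c → a + c ≠ 2 * b

/-- `stanleyBelow A n` is the set of elements of the Stanley sequence generated by `A`
that are smaller than `n`: at stage `n` we include `n` itself if `n ∈ A`, or if `n`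
exceeds every element of `A` and adjoining `n` to everything chosen so far stays 3-free
(the greedy rule). -/
def stanleyBelow (A : Finset ℕ) : ℕ → Set ℕ
  | 0 => ∅
  | n + 1 => stanleyBelow A n ∪
      {m | m = n ∧ (n ∈ A ∨ ((∀ a ∈ A, a < n) ∧ ThreeFree (stanleyBelow A n ∪ {n})))}

/-- The Stanley sequence `S(A)` generated by `A`, as a set of nonnegative integers. -/
def stanley (A : Finset ℕ) : Set ℕ := ⋃ n, stanleyBelow A n

/-- The counting function `S(A,x) = #{s ∈ S(A) : s ≤ x}`. -/
noncomputable def stanleyCount (A : Finset ℕ) (x : ℝ) : ℕ :=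
  Nat.card {s : ℕ | s ∈ stanley A ∧ (s : ℝ) ≤ x}

/-- `H S n = #{(s₁,s₂) : s₁,s₂ ∈ S, s₁ < s₂, n = 2s₂ - s₁}`. -/
noncomputable def H (S : Set ℕ) (n : ℕ) : ℕ :=
  Nat.card {p : ℕ × ℕ | p.1 ∈ S ∧ p.2 ∈ S ∧ p.1 < p.2 ∧ n + p.1 = 2 * p.2}

lemma tf_mono {S T : Set ℕ} (h : S ⊆ T) (hT : ThreeFree T) : ThreeFree S :=
  fun a ha b hb c hc => hT a (h ha) b (h hb) c (h hc)

lemma sb_lt {A : Finset ℕ} {m n : ℕ} (h : m ∈ stanleyBelow A n) : m < n := by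
  induction n with
  | zero => exact absurd h (Set.notMem_empty m)
  | succ n ih =>
    rcases h with h | h
    · exact (ih h).trans (Nat.lt_succ_self n)
    · exact h.1 ▸ Nat.lt_succ_self n

lemma sb_mem_disj {A : Finset ℕ} {m n : ℕ} (h : m ∈ stanleyBelow A n) :
    m ∈ A ∨ ∀ a ∈ A, a < m := by
  induction n with
  | zero => exact absurd h (Set.notMem_empty m)
  | succ n ih =>
    rcases h with h | h
    · exact ih h
    · rcases h.2 with h2 | h2
      · exact Or.inl (h.1 ▸ h2)
      · exact Or.inr (h.1 ▸ h2.1)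

lemma sb_tf {A : Finset ℕ} (hA3 : ThreeFree ↑A) (n : ℕ) : ThreeFree (stanleyBelow A n) := by
  induction n with
  | zero => intro a ha; exact absurd ha (Set.notMem_empty a)
  | succ n ih =>
    by_cases hC : n ∈ A ∨ ((∀ a ∈ A, a < n) ∧ ThreeFree (stanleyBelow A n ∪ {n}))
    · rcases hC with hC | hC
      · -- n ∈ A : stanleyBelow A (n+1) ⊆ A
        refine tf_mono ?_ hA3
        intro m hm
        rcases hm with hm | hm
        · rcases sb_mem_disj hm with h | h
          · exact h
          · have h1 := h n hC
            have h2 := sb_lt hm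
            omega
        · rw [hm.1]; exact hC
      · refine tf_mono ?_ hC.2
        intro m hm
        rcases hm with hm | hm
        · exact Or.inl hm
        · rw [hm.1]; exact Or.inr rfl
    · refine tf_mono ?_ ih
      intro m hm
      rcases hm with hm | hm
      · exact hm
      · exact absurd hm.2 hC

lemma mem_stanley_of_sb {A : Finset ℕ} {m n : ℕ} (h : m ∈ stanleyBelow A n) :
    m ∈ stanley A := Set.mem_iUnion.2 ⟨n, h⟩

lemma stanley_eq_sb {A : Finset ℕ} {m : ℕ} (h : m ∈ stanley A) :
    m ∈ stanleyBelow A (m + 1) := by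
  rcases Set.mem_iUnion.1 h with ⟨n, hn⟩
  clear h
  induction n with
  | zero => exact absurd hn (Set.notMem_empty m)
  | succ n ih =>
    rcases hn with hn | hn
    · exact ih hn
    · rw [hn.1]
      exact Or.inr ⟨rfl, hn.2⟩

lemma blocked {A : Finset ℕ} (hA3 : ThreeFree ↑A) {n : ℕ}
    (hlt : ∀ a ∈ A, a < n) (hns : n ∉ stanley A) :
    ∃ p : ℕ × ℕ, p.1 ∈ stanley A ∧ p.2 ∈ stanley A ∧ p.1 < p.2 ∧ p.2 < n ∧
      n + p.1 = 2 * p.2 := by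
  have hnA : n ∉ A := fun h => absurd (hlt n h) (lt_irrefl n)
  have h1 : n ∉ stanleyBelow A (n + 1) := fun h => hns (mem_stanley_of_sb h)
  have h2 : ¬ ThreeFree (stanleyBelow A n ∪ {n}) := by
    intro hTF
    exact h1 (Or.inr ⟨rfl, Or.inr ⟨hlt, hTF⟩⟩)
  unfold ThreeFree at h2
  push_neg at h2
  obtain ⟨a, ha, b, hb, c, hc, hab, hbc, habc⟩ := h2
  have hSn := sb_tf hA3 n
  -- resolve memberships
  have hc' : c = n ∨ c ∈ stanleyBelow A n := by
    rcases hc with hc | hc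
    · exact Or.inr hc
    · exact Or.inl hc
  rcases hc' with hceq | hcS
  · -- c = n
    have haS : a ∈ stanleyBelow A n := by
      rcases ha with ha | ha
      · exact ha
      · exfalso
        simp only [Set.mem_singleton_iff] at ha
        rcases hb with hb | hb
        · have := sb_lt hb; omega
        · simp only [Set.mem_singleton_iff] at hb; omega
    have hbS : b ∈ stanleyBelow A n := by
      rcases hb with hb | hb
      · exact hb
      · simp only [Set.mem_singleton_iff] at hb; omega
    exact ⟨(a, b), mem_stanley_of_sb haS, mem_stanley_of_sb hbS, hab, sb_lt hbS,
      by omega⟩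
  · exfalso
    have hcn := sb_lt hcS
    have haS : a ∈ stanleyBelow A n := by
      rcases ha with ha | ha
      · exact ha
      · simp at ha; omega
    have hbS : b ∈ stanleyBelow A n := by
      rcases hb with hb | hb
      · exact hb
      · simp at hb; omega
    exact hSn a haS b hbS c hcS hab hbc habc

/-- for every `ε > 0` there is `x₀` such that
`S(A,x) > x^(1/2 - ε)` for all `x ≥ x₀`. -/
theorem count_gt_rpow (A : Finset ℕ) (hA3 : ThreeFree ↑A) :
    ∀ ε : ℝ, 0 < ε → ∃ x₀ : ℝ, ∀ x : ℝ, x₀ ≤ x →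
      x ^ ((1 : ℝ) / 2 - ε) < (stanleyCount A x : ℝ) := by
  classical
  intro ε hε
  set ε' : ℝ := min ε (1/4) with hε'def
  have hε'pos : 0 < ε' := lt_min hε (by norm_num)
  have hε'le : ε' ≤ 1/4 := min_le_right _ _
  set δ : ℝ := 1/2 - ε' with hδdef
  set γ : ℝ := 2 * ε' with hγdef
  have hδpos : 0 < δ := by simp only [hδdef]; linarith
  have hγpos : 0 < γ := by simp only [hγdef]; linarith
  set M : ℕ := A.sup id with hMdef
  refine ⟨max (2 * M + 2) ((8:ℝ) ^ (1/γ) + 1), fun x hx => ?_⟩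
  have hx2M : (2 * M + 2 : ℝ) ≤ x := le_trans (le_max_left _ _) hx
  have hx8 : (8:ℝ) ^ (1/γ) + 1 ≤ x := le_trans (le_max_right _ _) hx
  have hx1 : (1:ℝ) ≤ x := by
    have : (0:ℝ) ≤ (8:ℝ) ^ (1/γ) := Real.rpow_nonneg (by norm_num) _
    linarith
  have hx0 : (0:ℝ) < x := lt_of_lt_of_le one_pos hx1
  set N : ℕ := Nat.floor x with hNdef
  have hNM : M + 2 ≤ N := by
    apply Nat.le_floor
    push_cast
    linarith
  -- the finset of sequence elements up to N
  set T : Finset ℕ := (Finset.range (N+1)).filter (fun s => s ∈ stanley A) with hTdef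
  set t : ℕ := T.card with htdef
  have hsle : ∀ s : ℕ, ((s:ℝ) ≤ x ↔ s ≤ N) := by
    intro s
    constructor
    · exact fun h => Nat.le_floor h
    · intro h
      calc (s:ℝ) ≤ (N:ℝ) := by exact_mod_cast h
        _ ≤ x := Nat.floor_le (le_of_lt hx0)
  have hcount : stanleyCount A x = t := by
    rw [stanleyCount]
    have hset : {s : ℕ | s ∈ stanley A ∧ (s : ℝ) ≤ x} = ↑T := by
      ext s
      simp only [Set.mem_setOf_eq, hTdef, Finset.coe_filter, Finset.mem_range,
        Nat.lt_succ_iff, hsle s]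
      tauto
    rw [hset, Nat.card_coe_set_eq, Set.ncard_coe_finset]
  -- blocked integers
  set B : Finset ℕ := (Finset.range (N+1)).filter (fun n => M < n ∧ n ∉ stanley A)
    with hBdef
  have hBpair : ∀ n ∈ B, ∃ p : ℕ × ℕ, p.1 ∈ stanley A ∧ p.2 ∈ stanley A ∧
      p.1 < p.2 ∧ p.2 < n ∧ n + p.1 = 2 * p.2 := by
    intro n hn
    rw [hBdef, Finset.mem_filter] at hn
    refine blocked hA3 (fun a ha => ?_) hn.2.2
    have : a ≤ M := Finset.le_sup (f := id) ha
    omega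
  set g : ℕ → ℕ × ℕ := fun n =>
    if h : ∃ p : ℕ × ℕ, p.1 ∈ stanley A ∧ p.2 ∈ stanley A ∧
        p.1 < p.2 ∧ p.2 < n ∧ n + p.1 = 2 * p.2 then h.choose else (0, 0) with hgdef
  have hg : ∀ n ∈ B, (g n).1 ∈ stanley A ∧ (g n).2 ∈ stanley A ∧
      (g n).1 < (g n).2 ∧ (g n).2 < n ∧ n + (g n).1 = 2 * (g n).2 := by
    intro n hn
    have h := hBpair n hn
    simp only [hgdef, dif_pos h]
    exact h.choose_spec
  have hBcard : B.card ≤ t * t := by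
    have : B.card ≤ (T ×ˢ T).card := by
      apply Finset.card_le_card_of_injOn g
      · intro n hn
        obtain ⟨h1, h2, h3, h4, h5⟩ := hg n hn
        rw [hBdef, Finset.mem_coe, Finset.mem_filter, Finset.mem_range] at hn
        rw [Finset.mem_coe, Finset.mem_product]
        constructor
        · rw [hTdef, Finset.mem_filter, Finset.mem_range]
          exact ⟨by omega, h1⟩
        · rw [hTdef, Finset.mem_filter, Finset.mem_range]
          exact ⟨by omega, h2⟩
      · intro n hn m hm heq
        obtain ⟨_, _, _, _, h5⟩ := hg n (by exact hn)
        obtain ⟨_, _, _, _, h5'⟩ := hg m (by exact hm)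
        rw [heq] at h5
        omega
    rwa [Finset.card_product, ← htdef] at this
  -- interval (M, N] is covered by T ∪ B
  have hIoc : Finset.Ioc M N ⊆ T ∪ B := by
    intro n hn
    rw [Finset.mem_Ioc] at hn
    rw [Finset.mem_union]
    by_cases hns : n ∈ stanley A
    · left; rw [hTdef, Finset.mem_filter, Finset.mem_range]; exact ⟨by omega, hns⟩
    · right; rw [hBdef, Finset.mem_filter, Finset.mem_range]
      exact ⟨by omega, hn.1, hns⟩
  have hNle : N ≤ t * t + t + M := by
    have h1 : (Finset.Ioc M N).card ≤ (T ∪ B).card := Finset.card_le_card hIoc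
    rw [Nat.card_Ioc] at h1
    have h2 : (T ∪ B).card ≤ t + B.card := by
      calc (T ∪ B).card ≤ T.card + B.card := Finset.card_union_le T B
        _ = t + B.card := by rw [htdef]
    omega
  -- pass to reals
  have hxN : x < (N:ℝ) + 1 := Nat.lt_floor_add_one x
  have hreal : x - M < ((t:ℝ) + 1)^2 := by
    have : (N:ℝ) ≤ (t:ℝ) * t + t + M := by exact_mod_cast hNle
    nlinarith
  -- rpow estimates
  have hxγ : (8:ℝ) < x ^ γ := by
    have h8 : (0:ℝ) ≤ (8:ℝ) ^ (1/γ) := Real.rpow_nonneg (by norm_num) _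
    have hlt : (8:ℝ) ^ (1/γ) < x := by linarith
    have := Real.rpow_lt_rpow h8 hlt hγpos
    rwa [← Real.rpow_mul (by norm_num), one_div_mul_cancel (ne_of_gt hγpos),
      Real.rpow_one] at this
  have hsum : x ^ (2*δ) * x ^ γ = x := by
    rw [← Real.rpow_add hx0]
    have h1 : 2*δ + γ = 1 := by simp only [hδdef, hγdef]; ring
    rw [h1, Real.rpow_one]
  have hx2δpos : (0:ℝ) < x ^ (2*δ) := Real.rpow_pos_of_pos hx0 _
  have h2δx : x ^ (2*δ) < x / 8 := by
    rw [lt_div_iff₀ (by norm_num)]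
    calc x ^ (2*δ) * 8 < x ^ (2*δ) * x ^ γ := by
          exact mul_lt_mul_of_pos_left hxγ hx2δpos
      _ = x := hsum
  -- x^δ ≥ 1
  have hxδ1 : (1:ℝ) ≤ x ^ δ := by
    rw [← Real.one_rpow δ]
    exact Real.rpow_le_rpow zero_le_one hx1 (le_of_lt hδpos)
  have hδsq : x ^ δ * x ^ δ = x ^ (2*δ) := by
    rw [← Real.rpow_add hx0]; ring_nf
  have hkey : (x ^ δ + 1)^2 < ((t:ℝ) + 1)^2 := by
    have hxM' : x / 2 ≤ x - M := by push_cast at hx2M ⊢; linarith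
    nlinarith [hδsq, h2δx, hxδ1, hreal]
  have hfin : x ^ δ < (t:ℝ) := by
    have := lt_of_pow_lt_pow_left₀ 2 (by positivity) hkey
    linarith
  rw [hcount]
  calc x ^ ((1:ℝ)/2 - ε) ≤ x ^ δ := by
        apply Real.rpow_le_rpow_of_exponent_le hx1
        have : ε' ≤ ε := min_le_left _ _
        simp only [hδdef]; linarith
    _ < (t:ℝ) := hfin
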